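/- For z ≥ 0, let f_z be the standard solution of the half-normal Stein equation with test function h_z = 1_{(-∞,z]}. Then f_z(x) = (1-F(z))F(x)/p(x) for 0 ≤ x ≤ z and f_z(x) = F(z)(1-F(x))/p(x) for x > z, where p(x) = 2φ(x) and F(x) = 2Φ(x)-1; moreover sup_{x≥0}|f_z(x)| = (1-Φ(z))(2Φ(z)-1)/φ(z) ≤ 1/2. -/

import Mathlib

open MeasureTheory Real

/-- Standard normal density. -/
noncomputable def stdPhi (x : ℝ) : ℝ := Real.exp (-x^2/2) / Real.sqrt (2*Real.pi)

/-- Standard normal distribution function. -/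
noncomputable def stdCDF (x : ℝ) : ℝ := ∫ t in Set.Iic x, stdPhi t

/-- The standard solution of the half-normal Stein equation for `h_z = 1_{(-∞,z]}`. -/
noncomputable def fz (z x : ℝ) : ℝ :=
  (stdPhi x)⁻¹ *
    ∫ t in (0:ℝ)..x, (Set.indicator (Set.Iic z) (fun _ => (1:ℝ)) t - (2*stdCDF z - 1)) * stdPhi t




lemma sqrt2pi_pos : 0 < Real.sqrt (2*Real.pi) := Real.sqrt_pos.2 (by positivity)

lemma stdPhi_pos (x : ℝ) : 0 < stdPhi x := div_pos (Real.exp_pos _) sqrt2pi_pos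

lemma continuous_stdPhi : Continuous stdPhi := by
  unfold stdPhi
  fun_prop

lemma stdPhi_eq (x : ℝ) : stdPhi x = (Real.sqrt (2*Real.pi))⁻¹ * Real.exp (-(1/2) * x^2) := by
  unfold stdPhi; rw [mul_comm, div_eq_mul_inv]; ring_nf

lemma integrable_stdPhi : Integrable stdPhi := by
  have h := integrable_exp_neg_mul_sq (b := 1/2) (by norm_num)
  have := h.const_mul (Real.sqrt (2*Real.pi))⁻¹
  refine this.congr ?_
  filter_upwards with x
  rw [stdPhi_eq]

lemma integral_stdPhi : ∫ x, stdPhi x = 1 := by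
  have h : ∫ x : ℝ, stdPhi x = (Real.sqrt (2*Real.pi))⁻¹ * ∫ x : ℝ, Real.exp (-(1/2) * x^2) := by
    rw [← integral_const_mul]; congr 1; ext x; rw [stdPhi_eq]
  rw [h, integral_gaussian, show π / (1/2) = 2 * π by ring]
  exact inv_mul_cancel₀ (ne_of_gt sqrt2pi_pos)

lemma hasDerivAt_stdPhi (x : ℝ) : HasDerivAt stdPhi (-x * stdPhi x) x := by
  have h1 : HasDerivAt (fun x : ℝ => -x^2/2) (-x) x := by
    have := ((hasDerivAt_pow 2 x).neg).div_const 2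
    simpa using this.congr_deriv (by ring)
  have h2 := (h1.exp).div_const (Real.sqrt (2*Real.pi))
  refine h2.congr_deriv ?_
  unfold stdPhi; ring

lemma stdCDF_sub (a b : ℝ) : stdCDF b - stdCDF a = ∫ t in a..b, stdPhi t :=
  intervalIntegral.integral_Iic_sub_Iic integrable_stdPhi.integrableOn integrable_stdPhi.integrableOn

lemma hasDerivAt_stdCDF (x : ℝ) : HasDerivAt stdCDF (stdPhi x) x := by
  have h : HasDerivAt (fun u => ∫ t in (0:ℝ)..u, stdPhi t) (stdPhi x) x :=
    intervalIntegral.integral_hasDerivAt_right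
      (integrable_stdPhi.intervalIntegrable)
      continuous_stdPhi.stronglyMeasurable.stronglyMeasurableAtFilter
      continuous_stdPhi.continuousAt
  have : ∀ u, stdCDF u = stdCDF 0 + ∫ t in (0:ℝ)..u, stdPhi t := by
    intro u; rw [← stdCDF_sub]; ring
  have heq : stdCDF = fun u => stdCDF 0 + ∫ t in (0:ℝ)..u, stdPhi t := funext this
  rw [heq]
  exact h.const_add (stdCDF 0)

lemma one_sub_stdCDF (x : ℝ) : 1 - stdCDF x = ∫ t in Set.Ioi x, stdPhi t := by
  have := intervalIntegral.integral_Iic_add_Ioi (b := x) (f := stdPhi) (μ := volume)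
    integrable_stdPhi.integrableOn integrable_stdPhi.integrableOn
  rw [integral_stdPhi] at this
  unfold stdCDF; linarith

lemma stdCDF_zero : stdCDF 0 = 1/2 := by
  have h1 : (∫ t in Set.Iic (0:ℝ), stdPhi t) = ∫ t in Set.Ioi (0:ℝ), stdPhi t := by
    have := integral_comp_neg_Iic (0:ℝ) stdPhi
    rw [neg_zero] at this
    rw [← this]
    congr 1; ext t; unfold stdPhi; norm_num
  have h2 := one_sub_stdCDF 0
  unfold stdCDF at *
  linarith

lemma one_sub_stdCDF_nonneg (x : ℝ) : 0 ≤ 1 - stdCDF x := by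
  rw [one_sub_stdCDF]
  exact setIntegral_nonneg measurableSet_Ioi (fun t _ => (stdPhi_pos t).le)

lemma intervalIntegral_stdPhi_nonneg {a b : ℝ} (hab : a ≤ b) : 0 ≤ ∫ t in a..b, stdPhi t :=
  intervalIntegral.integral_nonneg hab (fun t _ => (stdPhi_pos t).le)

lemma stdCDF_half_le {x : ℝ} (hx : 0 ≤ x) : 1/2 ≤ stdCDF x := by
  have h := stdCDF_sub 0 x
  have := intervalIntegral_stdPhi_nonneg hx
  rw [stdCDF_zero] at h; linarith

lemma integrable_mul_stdPhi : Integrable (fun t : ℝ => t * stdPhi t) := by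
  have h := (integrable_mul_exp_neg_mul_sq (b := 1/2) (by norm_num)).const_mul
    (Real.sqrt (2*Real.pi))⁻¹
  refine h.congr ?_
  filter_upwards with x
  rw [stdPhi_eq]; ring

lemma deriv_stdPhi (x : ℝ) : deriv stdPhi x = -x * stdPhi x := (hasDerivAt_stdPhi x).deriv

lemma stdPhi_antitone : AntitoneOn stdPhi (Set.Ici 0) := by
  apply antitoneOn_of_deriv_nonpos (convex_Ici 0) continuous_stdPhi.continuousOn
  · intro x _; exact (hasDerivAt_stdPhi x).differentiableAt.differentiableWithinAt
  · intro x hx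
    rw [interior_Ici] at hx
    rw [deriv_stdPhi]
    have := stdPhi_pos x
    nlinarith [le_of_lt (Set.mem_Ioi.mp hx)]

lemma tendsto_stdPhi_atTop : Filter.Tendsto stdPhi Filter.atTop (nhds 0) := by
  have h1 : Filter.Tendsto (fun x : ℝ => -x^2/2) Filter.atTop Filter.atBot := by
    apply Filter.Tendsto.atBot_div_const (by norm_num)
    exact Filter.tendsto_neg_atBot_iff.mpr (Filter.tendsto_pow_atTop (by norm_num : 2 ≠ 0))
  have h2 := (Real.tendsto_exp_atBot.comp h1).div_const (Real.sqrt (2*Real.pi))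
  rw [show (0:ℝ) = 0 / Real.sqrt (2*Real.pi) by simp] 
  exact h2

lemma integral_Ioi_mul_stdPhi (x : ℝ) : ∫ t in Set.Ioi x, t * stdPhi t = stdPhi x := by
  have h := integral_Ioi_of_hasDerivAt_of_tendsto (f := fun t => -stdPhi t)
    (f' := fun t => t * stdPhi t) (a := x) (m := 0)
    (by exact (continuous_stdPhi.neg).continuousWithinAt)
    (fun t _ => by exact (hasDerivAt_stdPhi t).neg.congr_deriv (by ring))
    (integrable_mul_stdPhi.integrableOn)
    (by simpa using tendsto_stdPhi_atTop.neg)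
  simpa using h

lemma tail_bound {x : ℝ} (hx : 0 ≤ x) : x * (1 - stdCDF x) ≤ stdPhi x := by
  rw [one_sub_stdCDF, ← integral_const_mul, ← integral_Ioi_mul_stdPhi x]
  apply setIntegral_mono_on
  · exact (integrable_stdPhi.integrableOn.const_mul x)
  · exact integrable_mul_stdPhi.integrableOn
  · exact measurableSet_Ioi
  · intro t ht
    have : x ≤ t := le_of_lt ht
    nlinarith [stdPhi_pos t]

lemma tendsto_one_sub_stdCDF : Filter.Tendsto (fun x => 1 - stdCDF x) Filter.atTop (nhds 0) := by
  have hub : Filter.Tendsto (fun x : ℝ => stdPhi 0 * x⁻¹) Filter.atTop (nhds 0) := by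
    simpa using tendsto_inv_atTop_zero.const_mul (stdPhi 0)
  refine squeeze_zero' ?_ ?_ hub
  · filter_upwards with x using one_sub_stdCDF_nonneg x
  · filter_upwards [Filter.eventually_gt_atTop (0:ℝ)] with x hx
    have h := tail_bound hx.le
    have hphi : stdPhi x ≤ stdPhi 0 := stdPhi_antitone Set.self_mem_Ici hx.le hx.le
    rw [← div_eq_mul_inv, le_div_iff₀ hx, mul_comm]
    linarith

lemma tendsto_stdCDF_atTop : Filter.Tendsto stdCDF Filter.atTop (nhds 1) := by
  have := tendsto_one_sub_stdCDF.const_sub 1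
  simpa using this

lemma exp_neg_le_two {c : ℝ} (hc : 0 ≤ c) : Real.exp (-c) ≤ 1 - c + c^2/2 := by
  have key : ∀ x : ℝ, 0 ≤ x → (fun u : ℝ => 1 - u + u^2/2 - Real.exp (-u)) 0 ≤
      (fun u : ℝ => 1 - u + u^2/2 - Real.exp (-u)) x := by
    intro x hx
    have hmono : MonotoneOn (fun u : ℝ => 1 - u + u^2/2 - Real.exp (-u)) (Set.Ici 0) := by
      apply monotoneOn_of_deriv_nonneg (convex_Ici 0) (by fun_prop)
      · intro u _; fun_prop
      · intro u hu
        rw [interior_Ici] at hu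
        have hd : HasDerivAt (fun u : ℝ => 1 - u + u^2/2 - Real.exp (-u))
            (-1 + u + Real.exp (-u)) u := by
          have h1 : HasDerivAt (fun u : ℝ => 1 - u + u^2/2) (-1 + u) u := by
            have := ((hasDerivAt_id u).const_sub 1).add (((hasDerivAt_pow 2 u)).div_const 2)
            exact this.congr_deriv (by push_cast; ring)
          have h2 : HasDerivAt (fun u : ℝ => Real.exp (-u)) (-Real.exp (-u)) u := by
            simpa using ((hasDerivAt_id u).neg.exp)
          exact (h1.sub h2).congr_deriv (by ring)
        rw [hd.deriv]
        have := Real.add_one_le_exp (-u)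
        have hu' := le_of_lt (Set.mem_Ioi.mp hu)
        linarith
    exact hmono Set.self_mem_Ici hx hx
  have := key c hc
  simp at this
  linarith

lemma exp_neg_ge_three {c : ℝ} (hc : 0 ≤ c) : 1 - c + c^2/2 - c^3/6 ≤ Real.exp (-c) := by
  have key : ∀ x : ℝ, 0 ≤ x → (fun u : ℝ => Real.exp (-u) - (1 - u + u^2/2 - u^3/6)) 0 ≤
      (fun u : ℝ => Real.exp (-u) - (1 - u + u^2/2 - u^3/6)) x := by
    intro x hx
    have hmono : MonotoneOn (fun u : ℝ => Real.exp (-u) - (1 - u + u^2/2 - u^3/6)) (Set.Ici 0) := by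
      apply monotoneOn_of_deriv_nonneg (convex_Ici 0) (by fun_prop)
      · intro u _; fun_prop
      · intro u hu
        rw [interior_Ici] at hu
        have hd : HasDerivAt (fun u : ℝ => Real.exp (-u) - (1 - u + u^2/2 - u^3/6))
            (-Real.exp (-u) - (-1 + u - u^2/2)) u := by
          have h2 : HasDerivAt (fun u : ℝ => Real.exp (-u)) (-Real.exp (-u)) u := by
            simpa using ((hasDerivAt_id u).neg.exp)
          have h1 : HasDerivAt (fun u : ℝ => 1 - u + u^2/2 - u^3/6) (-1 + u - u^2/2) u := by
            have := (((hasDerivAt_id u).const_sub 1).add (((hasDerivAt_pow 2 u)).div_const 2)).sub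
              (((hasDerivAt_pow 3 u)).div_const 6)
            exact this.congr_deriv (by push_cast; ring)
          exact (h2.sub h1).congr_deriv (by ring)
        rw [hd.deriv]
        have := exp_neg_le_two (le_of_lt (Set.mem_Ioi.mp hu))
        linarith
    exact hmono Set.self_mem_Ici hx hx
  have := key c hc
  simp at this
  linarith

lemma exp_neg_le_four {c : ℝ} (hc : 0 ≤ c) :
    Real.exp (-c) ≤ 1 - c + c^2/2 - c^3/6 + c^4/24 := by
  have key : ∀ x : ℝ, 0 ≤ x →
      (fun u : ℝ => 1 - u + u^2/2 - u^3/6 + u^4/24 - Real.exp (-u)) 0 ≤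
      (fun u : ℝ => 1 - u + u^2/2 - u^3/6 + u^4/24 - Real.exp (-u)) x := by
    intro x hx
    have hmono : MonotoneOn (fun u : ℝ => 1 - u + u^2/2 - u^3/6 + u^4/24 - Real.exp (-u))
        (Set.Ici 0) := by
      apply monotoneOn_of_deriv_nonneg (convex_Ici 0) (by fun_prop)
      · intro u _; fun_prop
      · intro u hu
        rw [interior_Ici] at hu
        have hd : HasDerivAt (fun u : ℝ => 1 - u + u^2/2 - u^3/6 + u^4/24 - Real.exp (-u))
            ((-1 + u - u^2/2 + u^3/6) + Real.exp (-u)) u := by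
          have h2 : HasDerivAt (fun u : ℝ => Real.exp (-u)) (-Real.exp (-u)) u := by
            simpa using ((hasDerivAt_id u).neg.exp)
          have h1 : HasDerivAt (fun u : ℝ => 1 - u + u^2/2 - u^3/6 + u^4/24)
              (-1 + u - u^2/2 + u^3/6) u := by
            have := ((((hasDerivAt_id u).const_sub 1).add
              (((hasDerivAt_pow 2 u)).div_const 2)).sub
              (((hasDerivAt_pow 3 u)).div_const 6)).add (((hasDerivAt_pow 4 u)).div_const 24)
            exact this.congr_deriv (by push_cast; ring)
          exact (h1.sub h2).congr_deriv (by ring)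
        rw [hd.deriv]
        have := exp_neg_ge_three (le_of_lt (Set.mem_Ioi.mp hu))
        linarith
    exact hmono Set.self_mem_Ici hx hx
  have := key c hc
  simp at this
  linarith

lemma sqrt2pi_ge : (12533/5000 : ℝ) ≤ Real.sqrt (2*Real.pi) := by
  rw [show (12533/5000 : ℝ) = Real.sqrt ((12533/5000)^2) by
    rw [Real.sqrt_sq (by norm_num)]]
  apply Real.sqrt_le_sqrt
  nlinarith [Real.pi_gt_d6]

lemma stdPhi_le_poly (s : ℝ) :
    stdPhi s ≤ (1 - s^2/2 + s^4/8 - s^6/48 + s^8/384) / Real.sqrt (2*Real.pi) := by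
  unfold stdPhi
  apply div_le_div_of_nonneg_right ?_ sqrt2pi_pos.le
  have h := exp_neg_le_four (c := s^2/2) (by positivity)
  calc Real.exp (-s^2/2) = Real.exp (-(s^2/2)) := by ring_nf
    _ ≤ 1 - s^2/2 + (s^2/2)^2/2 - (s^2/2)^3/6 + (s^2/2)^4/24 := h
    _ = 1 - s^2/2 + s^4/8 - s^6/48 + s^8/384 := by ring

lemma hasDerivAt_P (u : ℝ) :
    HasDerivAt (fun t : ℝ => t - t^3/6 + t^5/40 - t^7/336 + t^9/3456)
      (1 - u^2/2 + u^4/8 - u^6/48 + u^8/384) u := by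
  have := ((((hasDerivAt_id u).sub ((hasDerivAt_pow 3 u).div_const 6)).add
    ((hasDerivAt_pow 5 u).div_const 40)).sub
    ((hasDerivAt_pow 7 u).div_const 336)).add ((hasDerivAt_pow 9 u).div_const 3456)
  exact this.congr_deriv (by push_cast; ring)

lemma integral_poly (t : ℝ) :
    ∫ s in (0:ℝ)..t, (1 - s^2/2 + s^4/8 - s^6/48 + s^8/384) =
      t - t^3/6 + t^5/40 - t^7/336 + t^9/3456 := by
  have h := intervalIntegral.integral_eq_sub_of_hasDerivAt (a := (0:ℝ)) (b := t)
    (f := fun t : ℝ => t - t^3/6 + t^5/40 - t^7/336 + t^9/3456)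
    (f' := fun s : ℝ => 1 - s^2/2 + s^4/8 - s^6/48 + s^8/384)
    (fun u _ => hasDerivAt_P u) (by apply Continuous.intervalIntegrable; fun_prop)
  rw [h]; ring

lemma integral_stdPhi_le {t : ℝ} (ht : 0 ≤ t) :
    ∫ s in (0:ℝ)..t, stdPhi s ≤
      (t - t^3/6 + t^5/40 - t^7/336 + t^9/3456) / Real.sqrt (2*Real.pi) := by
  have h1 : ∫ s in (0:ℝ)..t, stdPhi s ≤
      ∫ s in (0:ℝ)..t, (1 - s^2/2 + s^4/8 - s^6/48 + s^8/384) / Real.sqrt (2*Real.pi) := by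
    apply intervalIntegral.integral_mono_on ht
      (integrable_stdPhi.intervalIntegrable)
      (by apply Continuous.intervalIntegrable; fun_prop)
    intro x _; exact stdPhi_le_poly x
  rw [intervalIntegral.integral_div, integral_poly] at h1
  exact h1

lemma stdPhi_le_eighth {s : ℝ} (hs : (8:ℝ)/5 ≤ s) : stdPhi s ≤ 1/8 := by
  have h1 : stdPhi s ≤ stdPhi (8/5) :=
    stdPhi_antitone (by norm_num : (8:ℝ)/5 ∈ Set.Ici 0)
      (Set.mem_Ici.mpr (le_trans (by norm_num) hs)) hs
  have h2 := stdPhi_le_poly (8/5)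
  have h3 : ((1:ℝ) - (8/5)^2/2 + (8/5)^4/8 - (8/5)^6/48 + (8/5)^8/384) / Real.sqrt (2*Real.pi)
      ≤ ((1:ℝ) - (8/5)^2/2 + (8/5)^4/8 - (8/5)^6/48 + (8/5)^8/384) / (12533/5000) := by
    apply div_le_div_of_nonneg_left (by norm_num) (by norm_num) sqrt2pi_ge
  have h4 : ((1:ℝ) - (8/5)^2/2 + (8/5)^4/8 - (8/5)^6/48 + (8/5)^8/384) / (12533/5000 : ℝ)
      ≤ 1/8 := by norm_num
  linarith

lemma key_cdf_bound {t : ℝ} (ht : 0 ≤ t) : stdCDF t ≤ 3/4 + t/8 := by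
  have hC : stdCDF t = 1/2 + ∫ s in (0:ℝ)..t, stdPhi s := by
    have := stdCDF_sub 0 t; rw [stdCDF_zero] at this; linarith
  have goal2 : ∫ s in (0:ℝ)..t, stdPhi s ≤ (2+t)/8 := by
    rcases le_or_gt t (8/5) with hle | hgt
    · have h1 := integral_stdPhi_le ht
      set P := t - t^3/6 + t^5/40 - t^7/336 + t^9/3456 with hP
      have hPnn : 0 ≤ P := by
        have h0 : 0 ≤ ∫ s in (0:ℝ)..t, stdPhi s := intervalIntegral_stdPhi_nonneg ht
        by_contra hneg
        push_neg at hneg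
        have : P / Real.sqrt (2*Real.pi) < 0 := div_neg_of_neg_of_pos hneg sqrt2pi_pos
        linarith
      have h2 : P / Real.sqrt (2*Real.pi) ≤ P / (12533/5000) := by
        rcases eq_or_lt_of_le hPnn with h0 | h0
        · rw [← h0]; simp
        · exact div_le_div_of_nonneg_left h0.le (by norm_num) sqrt2pi_ge
      have h3 : P / (12533/5000 : ℝ) ≤ (2+t)/8 := by
        rw [div_le_div_iff₀ (by norm_num) (by norm_num)]
        rw [hP]
        nlinarith [sq_nonneg t, sq_nonneg (t-1), sq_nonneg (t-8/5), mul_nonneg ht ht,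
          sq_nonneg (t^2-2), sq_nonneg (t^3-2*t), mul_nonneg (mul_nonneg ht ht) ht,
          sq_nonneg (t^4-t^2), pow_nonneg ht 5, pow_nonneg ht 7, pow_nonneg ht 9,
          mul_nonneg (sub_nonneg.2 hle) ht, sq_nonneg (t^2 - 5/2)]
      linarith
    · have hsplit : ∫ s in (0:ℝ)..t, stdPhi s =
          (∫ s in (0:ℝ)..(8/5:ℝ), stdPhi s) + ∫ s in (8/5:ℝ)..t, stdPhi s :=
        (intervalIntegral.integral_add_adjacent_intervals
          (integrable_stdPhi.intervalIntegrable) (integrable_stdPhi.intervalIntegrable)).symm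
      have h1 : ∫ s in (0:ℝ)..(8/5:ℝ), stdPhi s ≤ (2+8/5)/8 := by
        have ha := integral_stdPhi_le (t := 8/5) (by norm_num)
        have hb : ((8:ℝ)/5 - (8/5)^3/6 + (8/5)^5/40 - (8/5)^7/336 + (8/5)^9/3456)
            / Real.sqrt (2*Real.pi) ≤
            ((8:ℝ)/5 - (8/5)^3/6 + (8/5)^5/40 - (8/5)^7/336 + (8/5)^9/3456) / (12533/5000) :=
          div_le_div_of_nonneg_left (by norm_num) (by norm_num) sqrt2pi_ge
        have hc : ((8:ℝ)/5 - (8/5)^3/6 + (8/5)^5/40 - (8/5)^7/336 + (8/5)^9/3456)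
            / (12533/5000 : ℝ) ≤ (2+8/5)/8 := by norm_num
        linarith
      have h2 : ∫ s in (8/5:ℝ)..t, stdPhi s ≤ (t - 8/5) * (1/8) := by
        have := intervalIntegral.integral_mono_on hgt.le
          (integrable_stdPhi.intervalIntegrable)
          (intervalIntegrable_const)
          (fun x hx => stdPhi_le_eighth hx.1)
        simpa using this
      rw [hsplit]; linarith
  linarith

lemma continuous_stdCDF : Continuous stdCDF := by
  have : Differentiable ℝ stdCDF := fun x => (hasDerivAt_stdCDF x).differentiableAt
  exact this.continuous

lemma hasDerivAt_g (x : ℝ) :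
    HasDerivAt (fun x => (2*stdCDF x - 1) / stdPhi x)
      ((2*stdPhi x * stdPhi x - (2*stdCDF x - 1) * (-x * stdPhi x)) / (stdPhi x)^2) x := by
  exact (((hasDerivAt_stdCDF x).const_mul 2).sub_const 1).div (hasDerivAt_stdPhi x)
    (ne_of_gt (stdPhi_pos x))

lemma g_mono : MonotoneOn (fun x => (2*stdCDF x - 1) / stdPhi x) (Set.Ici 0) := by
  apply monotoneOn_of_deriv_nonneg (convex_Ici 0)
  · exact ((((continuous_const.mul continuous_stdCDF : Continuous fun x => (2:ℝ) * stdCDF x)).sub continuous_const).div continuous_stdPhi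
      (fun x => ne_of_gt (stdPhi_pos x))).continuousOn
  · intro x _; exact (hasDerivAt_g x).differentiableAt.differentiableWithinAt
  · intro x hx
    rw [interior_Ici] at hx
    rw [(hasDerivAt_g x).deriv]
    have h1 := stdPhi_pos x
    have h2 := stdCDF_half_le (le_of_lt (Set.mem_Ioi.mp hx))
    have h3 := le_of_lt (Set.mem_Ioi.mp hx)
    apply div_nonneg _ (by positivity)
    nlinarith [mul_nonneg (mul_nonneg h3 (by linarith : (0:ℝ) ≤ 2*stdCDF x - 1)) h1.le]

lemma hasDerivAt_h (x : ℝ) :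
    HasDerivAt (fun x => (1 - stdCDF x) / stdPhi x)
      ((-stdPhi x * stdPhi x - (1 - stdCDF x) * (-x * stdPhi x)) / (stdPhi x)^2) x := by
  have h1 : HasDerivAt (fun x => 1 - stdCDF x) (-stdPhi x) x := by
    simpa using (hasDerivAt_stdCDF x).const_sub 1
  exact h1.div (hasDerivAt_stdPhi x) (ne_of_gt (stdPhi_pos x))

lemma h_anti : AntitoneOn (fun x => (1 - stdCDF x) / stdPhi x) (Set.Ici 0) := by
  apply antitoneOn_of_deriv_nonpos (convex_Ici 0)
  · exact ((continuous_const.sub continuous_stdCDF).div continuous_stdPhi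
      (fun x => ne_of_gt (stdPhi_pos x))).continuousOn
  · intro x _; exact (hasDerivAt_h x).differentiableAt.differentiableWithinAt
  · intro x hx
    rw [interior_Ici] at hx
    rw [(hasDerivAt_h x).deriv]
    have h1 := stdPhi_pos x
    have h2 := tail_bound (le_of_lt (Set.mem_Ioi.mp hx))
    apply div_nonpos_of_nonpos_of_nonneg _ (by positivity)
    nlinarith

noncomputable def Vfun (x : ℝ) : ℝ := stdPhi x / 2 - (1 - stdCDF x) * (2*stdCDF x - 1)

lemma hasDerivAt_V (x : ℝ) :
    HasDerivAt Vfun (stdPhi x * (4*stdCDF x - 3 - x/2)) x := by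
  have h1 : HasDerivAt (fun x => stdPhi x / 2) (-x * stdPhi x / 2) x :=
    (hasDerivAt_stdPhi x).div_const 2
  have h2 : HasDerivAt (fun x => (1 - stdCDF x) * (2*stdCDF x - 1))
      ((-stdPhi x) * (2*stdCDF x - 1) + (1 - stdCDF x) * (2*stdPhi x)) x := by
    have ha : HasDerivAt (fun x => 1 - stdCDF x) (-stdPhi x) x := by
      simpa using (hasDerivAt_stdCDF x).const_sub 1
    exact ha.mul (((hasDerivAt_stdCDF x).const_mul 2).sub_const 1)
  exact (h1.sub h2).congr_deriv (by ring)

lemma V_anti : AntitoneOn Vfun (Set.Ici 0) := by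
  apply antitoneOn_of_deriv_nonpos (convex_Ici 0)
  · exact (((continuous_stdPhi.div_const 2).sub
      ((continuous_const.sub continuous_stdCDF).mul
        (((continuous_const.mul continuous_stdCDF : Continuous fun x => (2:ℝ) * stdCDF x)).sub continuous_const))) : Continuous Vfun).continuousOn
  · intro x _; exact (hasDerivAt_V x).differentiableAt.differentiableWithinAt
  · intro x hx
    rw [interior_Ici] at hx
    rw [(hasDerivAt_V x).deriv]
    have h1 := stdPhi_pos x
    have h2 := key_cdf_bound (le_of_lt (Set.mem_Ioi.mp hx))
    nlinarith

lemma tendsto_V : Filter.Tendsto Vfun Filter.atTop (nhds 0) := by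
  have h1 : Filter.Tendsto (fun x => 2*stdCDF x - 1) Filter.atTop (nhds 1) := by
    have := (tendsto_stdCDF_atTop.const_mul 2).sub_const 1
    norm_num at this; exact this
  have h2 := tendsto_one_sub_stdCDF.mul h1
  have h3 := tendsto_stdPhi_atTop.div_const 2
  have := h3.sub h2
  norm_num at this
  exact this

lemma V_nonneg {z : ℝ} (hz : 0 ≤ z) : 0 ≤ Vfun z := by
  refine le_of_tendsto tendsto_V ?_
  filter_upwards [Filter.eventually_ge_atTop z] with y hy
  exact V_anti (Set.mem_Ici.mpr hz) (Set.mem_Ici.mpr (le_trans hz hy)) hy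

lemma integrable_fz_integrand (z : ℝ) :
    Integrable (fun t => (Set.indicator (Set.Iic z) (fun _ => (1:ℝ)) t - (2*stdCDF z - 1)) * stdPhi t) := by
  have h : Integrable (fun t => Set.indicator (Set.Iic z) stdPhi t
      - (2*stdCDF z - 1) * stdPhi t) :=
    (integrable_stdPhi.indicator measurableSet_Iic).sub (integrable_stdPhi.const_mul _)
  refine h.congr ?_
  filter_upwards with t
  by_cases ht : t ∈ Set.Iic z
  · simp [Set.indicator_of_mem ht]; ring
  · simp [Set.indicator_of_notMem ht]; ring

lemma fz_formula_le {z x : ℝ} (hx : 0 ≤ x) (hxz : x ≤ z) :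
    fz z x = (1 - (2*stdCDF z - 1)) * (2*stdCDF x - 1) / (2*stdPhi x) := by
  have hcongr : ∫ t in (0:ℝ)..x,
      (Set.indicator (Set.Iic z) (fun _ => (1:ℝ)) t - (2*stdCDF z - 1)) * stdPhi t
      = ∫ t in (0:ℝ)..x, (1 - (2*stdCDF z - 1)) * stdPhi t := by
    apply intervalIntegral.integral_congr
    intro t ht
    rw [Set.uIcc_of_le hx] at ht
    have : t ∈ Set.Iic z := Set.mem_Iic.mpr (le_trans ht.2 hxz)
    simp [Set.indicator_of_mem this]
  rw [fz, hcongr, intervalIntegral.integral_const_mul, ← stdCDF_sub, stdCDF_zero]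
  have hφ := stdPhi_pos x
  field_simp

lemma fz_formula_gt {z x : ℝ} (hz : 0 ≤ z) (hzx : z < x) :
    fz z x = (2*stdCDF z - 1) * (1 - (2*stdCDF x - 1)) / (2*stdPhi x) := by
  have hsplit : ∫ t in (0:ℝ)..x,
      (Set.indicator (Set.Iic z) (fun _ => (1:ℝ)) t - (2*stdCDF z - 1)) * stdPhi t
      = (∫ t in (0:ℝ)..z,
          (Set.indicator (Set.Iic z) (fun _ => (1:ℝ)) t - (2*stdCDF z - 1)) * stdPhi t)
        + ∫ t in z..x,
          (Set.indicator (Set.Iic z) (fun _ => (1:ℝ)) t - (2*stdCDF z - 1)) * stdPhi t :=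
    (intervalIntegral.integral_add_adjacent_intervals
      ((integrable_fz_integrand z).intervalIntegrable)
      ((integrable_fz_integrand z).intervalIntegrable)).symm
  have h1 : ∫ t in (0:ℝ)..z,
      (Set.indicator (Set.Iic z) (fun _ => (1:ℝ)) t - (2*stdCDF z - 1)) * stdPhi t
      = (1 - (2*stdCDF z - 1)) * (stdCDF z - 1/2) := by
    have hcongr : ∫ t in (0:ℝ)..z,
        (Set.indicator (Set.Iic z) (fun _ => (1:ℝ)) t - (2*stdCDF z - 1)) * stdPhi t
        = ∫ t in (0:ℝ)..z, (1 - (2*stdCDF z - 1)) * stdPhi t := by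
      apply intervalIntegral.integral_congr
      intro t ht
      rw [Set.uIcc_of_le hz] at ht
      simp [Set.indicator_of_mem (Set.mem_Iic.mpr ht.2)]
    rw [hcongr, intervalIntegral.integral_const_mul, ← stdCDF_sub, stdCDF_zero]
  have h2 : ∫ t in z..x,
      (Set.indicator (Set.Iic z) (fun _ => (1:ℝ)) t - (2*stdCDF z - 1)) * stdPhi t
      = -(2*stdCDF z - 1) * (stdCDF x - stdCDF z) := by
    rw [intervalIntegral.integral_of_le hzx.le]
    have hcongr : ∫ t in Set.Ioc z x,
        (Set.indicator (Set.Iic z) (fun _ => (1:ℝ)) t - (2*stdCDF z - 1)) * stdPhi t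
        = ∫ t in Set.Ioc z x, -(2*stdCDF z - 1) * stdPhi t := by
      apply setIntegral_congr_fun measurableSet_Ioc
      intro t ht
      have : t ∉ Set.Iic z := by simp [Set.mem_Iic]; exact ht.1
      simp [Set.indicator_of_notMem this]
    rw [hcongr, ← intervalIntegral.integral_of_le hzx.le,
      intervalIntegral.integral_const_mul, ← stdCDF_sub]
  rw [fz, hsplit, h1, h2]
  have hφ := stdPhi_pos x
  field_simp
  ring

theorem stmt11 (z : ℝ) (hz : 0 ≤ z) :
    (∀ x : ℝ, 0 ≤ x → x ≤ z →
        fz z x = (1 - (2*stdCDF z - 1)) * (2*stdCDF x - 1) / (2*stdPhi x)) ∧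
    (∀ x : ℝ, z < x →
        fz z x = (2*stdCDF z - 1) * (1 - (2*stdCDF x - 1)) / (2*stdPhi x)) ∧
    IsGreatest ((fun x => |fz z x|) '' Set.Ici 0)
      ((1 - stdCDF z) * (2*stdCDF z - 1) / stdPhi z) ∧
    (1 - stdCDF z) * (2*stdCDF z - 1) / stdPhi z ≤ 1/2 := by
  have hφz := stdPhi_pos z
  have hCz1 := one_sub_stdCDF_nonneg z
  have hCzh := stdCDF_half_le hz
  set M := (1 - stdCDF z) * (2*stdCDF z - 1) / stdPhi z with hM
  have hMnn : 0 ≤ M := div_nonneg (mul_nonneg hCz1 (by linarith)) hφz.le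
  refine ⟨fun x hx hxz => fz_formula_le hx hxz, fun x hzx => fz_formula_gt hz hzx, ⟨?_, ?_⟩, ?_⟩
  · -- membership : |fz z z| = M
    refine ⟨z, Set.mem_Ici.mpr hz, ?_⟩
    show |fz z z| = M
    have h := fz_formula_le hz (le_refl z)
    have : fz z z = M := by
      rw [h, hM]; field_simp; ring
    rw [this, abs_of_nonneg hMnn]
  · -- upper bound
    rintro y ⟨x, hx, rfl⟩
    rw [Set.mem_Ici] at hx
    rcases le_or_gt x z with hxz | hzx
    · have hf := fz_formula_le hx hxz
      have hφx := stdPhi_pos x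
      have hCxh := stdCDF_half_le hx
      have heq : fz z x = (1 - stdCDF z) * ((2*stdCDF x - 1) / stdPhi x) := by
        rw [hf]; field_simp; ring
      have hnn : 0 ≤ fz z x := by
        rw [heq]; exact mul_nonneg hCz1 (div_nonneg (by linarith) hφx.le)
      show |fz z x| ≤ M
      rw [abs_of_nonneg hnn, heq, hM]
      have hg := g_mono (Set.mem_Ici.mpr hx) (Set.mem_Ici.mpr hz) hxz
      have : (1 - stdCDF z) * ((2*stdCDF x - 1) / stdPhi x)
          ≤ (1 - stdCDF z) * ((2*stdCDF z - 1) / stdPhi z) :=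
        mul_le_mul_of_nonneg_left hg hCz1
      calc (1 - stdCDF z) * ((2*stdCDF x - 1) / stdPhi x)
          ≤ (1 - stdCDF z) * ((2*stdCDF z - 1) / stdPhi z) := this
        _ = (1 - stdCDF z) * (2*stdCDF z - 1) / stdPhi z := by ring
    · have hf := fz_formula_gt hz hzx
      have hφx := stdPhi_pos x
      have hCx1 := one_sub_stdCDF_nonneg x
      have heq : fz z x = (2*stdCDF z - 1) * ((1 - stdCDF x) / stdPhi x) := by
        rw [hf]; field_simp; ring
      have hnn : 0 ≤ fz z x := by
        rw [heq]; exact mul_nonneg (by linarith) (div_nonneg hCx1 hφx.le)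
      show |fz z x| ≤ M
      rw [abs_of_nonneg hnn, heq, hM]
      have hh := h_anti (Set.mem_Ici.mpr hz) (Set.mem_Ici.mpr (le_trans hz hzx.le)) hzx.le
      have : (2*stdCDF z - 1) * ((1 - stdCDF x) / stdPhi x)
          ≤ (2*stdCDF z - 1) * ((1 - stdCDF z) / stdPhi z) :=
        mul_le_mul_of_nonneg_left hh (by linarith)
      calc (2*stdCDF z - 1) * ((1 - stdCDF x) / stdPhi x)
          ≤ (2*stdCDF z - 1) * ((1 - stdCDF z) / stdPhi z) := this
        _ = (1 - stdCDF z) * (2*stdCDF z - 1) / stdPhi z := by ring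
  · -- final bound
    have hV := V_nonneg hz
    rw [hM, div_le_iff₀ hφz]
    unfold Vfun at hV
    linarith
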